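/- Let P be a finitely generated commutative monoid (written additively) and S ⊆ P a submonoid. Then there exist finitely many elements s₁, …, s_r ∈ S such that the additive congruence on P generated by {(s, 0) : s ∈ S} equals the additive congruence generated by {(s₁, 0), …, (s_r, 0)}. Equivalently, every cokernel P → Q (i.e., every quotient of P by a submonoid) is the cokernel of a homomorphism ℕ^r → P from a finitely generated free commutative monoid. -/

import Mathlib

/-- Every element of the subgroup closure of (the coercion of) an additive
submonoid is a difference of two elements of the submonoid. -/
lemma exists_sub_of_mem_closure {G : Type*} [AddCommGroup G] (M : AddSubmonoid G) {h : G}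
    (hh : h ∈ AddSubgroup.closure (M : Set G)) :
    ∃ u ∈ M, ∃ v ∈ M, h = u - v := by
  induction hh using AddSubgroup.closure_induction with
  | mem x hx => exact ⟨x, hx, 0, M.zero_mem, by simp⟩
  | zero => exact ⟨0, M.zero_mem, 0, M.zero_mem, by simp⟩
  | add x y _ _ ihx ihy =>
    obtain ⟨u1, hu1, v1, hv1, rfl⟩ := ihx
    obtain ⟨u2, hu2, v2, hv2, rfl⟩ := ihy
    exact ⟨u1 + u2, M.add_mem hu1 hu2, v1 + v2, M.add_mem hv1 hv2, by abel⟩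
  | neg x _ ihx =>
    obtain ⟨u, hu, v, hv, rfl⟩ := ihx
    exact ⟨v, hv, u, hu, by abel⟩

/-- If every element of `S` becomes an element of the submonoid generated by the `s i`
after adding an element of that submonoid, then the two congruences agree. -/
lemma key_congruence {P : Type*} [AddCommMonoid P] (S : AddSubmonoid P) {r : ℕ}
    (s : Fin r → P) (hs : ∀ i, s i ∈ S)
    (hgen : ∀ a ∈ S, ∃ u ∈ AddSubmonoid.closure (Set.range s),
      ∃ v ∈ AddSubmonoid.closure (Set.range s), a + v = u) :
    addConGen (fun x y : P => x ∈ S ∧ y = 0) =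
      addConGen (fun x y : P => (∃ i, x = s i) ∧ y = 0) := by
  set c := addConGen (fun x y : P => (∃ i, x = s i) ∧ y = 0) with hc
  apply le_antisymm
  · apply AddCon.addConGen_le.2
    rintro x y ⟨hx, rfl⟩
    -- every element of the closure of the range of `s` is `c`-related to `0`
    have hcl : ∀ w ∈ AddSubmonoid.closure (Set.range s), c w 0 := by
      intro w hw
      induction hw using AddSubmonoid.closure_induction with
      | mem z hz =>
        obtain ⟨i, rfl⟩ := hz
        exact AddConGen.Rel.of _ _ ⟨⟨i, rfl⟩, rfl⟩
      | zero => exact c.refl 0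
      | add a b _ _ iha ihb => simpa using c.add iha ihb
    obtain ⟨u, hu, v, hv, huv⟩ := hgen x hx
    have h1 : c x (x + v) := by
      have := c.add (c.refl x) ((hcl v hv).symm)
      simpa using this
    exact (h1.trans (huv ▸ hcl u hu) : c x 0)
  · apply AddCon.addConGen_le.2
    rintro x y ⟨⟨i, rfl⟩, rfl⟩
    exact AddConGen.Rel.of _ _ ⟨hs i, rfl⟩

/-- The heart of the proof, carried out for the free commutative monoid `ℕ^n`
mapping onto `P`: there is a finite family in `S` such that every element of `S`
lands in the submonoid it generates after adding a suitable element of that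
submonoid.  This uses that a subgroup of `ℤ^n` is finitely generated. -/
lemma exists_fin_family {P : Type u} [AddCommMonoid P] {n : ℕ} (φ : (Fin n → ℕ) →+ P)
    (S : AddSubmonoid P) (hsurj : Function.Surjective φ) :
    ∃ (r : ℕ) (s : Fin r → P), (∀ i, s i ∈ S) ∧
      ∀ a ∈ S, ∃ u ∈ AddSubmonoid.closure (Set.range s),
        ∃ v ∈ AddSubmonoid.closure (Set.range s), a + v = u := by
  classical
  set ι : (Fin n → ℕ) →+ (Fin n → ℤ) :=
    { toFun := fun f i => (f i : ℤ)
      map_zero' := by funext i; simp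
      map_add' := fun f g => by funext i; push_cast; rfl } with hιdef
  have hι : Function.Injective ι := by
    intro f g h
    funext i
    have := congrFun h i
    simpa [hιdef] using this
  set S' := S.comap φ with hS'
  set H : AddSubgroup (Fin n → ℤ) := AddSubgroup.closure ((S'.map ι : AddSubmonoid _) : Set _)
    with hH
  obtain ⟨G, hG⟩ := IsNoetherian.noetherian (AddSubgroup.toIntSubmodule H)
  have hGmem : ∀ g ∈ G, ∃ a ∈ S', ∃ b ∈ S', (g : Fin n → ℤ) = ι a - ι b := by
    intro g hg
    have hgH : g ∈ H := by
      have : g ∈ Submodule.span ℤ (↑G : Set (Fin n → ℤ)) := Submodule.subset_span hg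
      rw [hG] at this
      exact this
    obtain ⟨u, hu, v, hv, huv⟩ := exists_sub_of_mem_closure (S'.map ι) hgH
    obtain ⟨a, ha, rfl⟩ := hu
    obtain ⟨b, hb, rfl⟩ := hv
    exact ⟨a, ha, b, hb, huv⟩
  choose A hA B hB hAB using hGmem
  set t : (↑(G : Finset _) ⊕ ↑(G : Finset _)) → (Fin n → ℕ) :=
    fun j => Sum.elim (fun g => A g.1 g.2) (fun g => B g.1 g.2) j with ht
  set N := AddSubmonoid.closure (Set.range t) with hN
  have htS' : ∀ j, t j ∈ S' := by
    rintro (g | g) <;> simp [ht, hA, hB]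
  -- every element of `S'` becomes an element of `N` upon adding an element of `N`
  have hmain : ∀ a' ∈ S', ∃ u ∈ N, ∃ v ∈ N, a' + v = u := by
    intro a' ha'
    have h1 : ι a' ∈ AddSubgroup.closure ((N.map ι : AddSubmonoid _) : Set _) := by
      have h2 : ι a' ∈ H := AddSubgroup.subset_closure ⟨a', ha', rfl⟩
      have h3 : Submodule.span ℤ (↑G : Set (Fin n → ℤ)) ≤
          AddSubgroup.toIntSubmodule (AddSubgroup.closure ((N.map ι : AddSubmonoid _) : Set _)) := by
        rw [Submodule.span_le]
        intro g hg
        have hAmem : ι (A g hg) ∈ AddSubgroup.closure ((N.map ι : AddSubmonoid _) : Set _) :=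
          AddSubgroup.subset_closure ⟨A g hg, AddSubmonoid.subset_closure ⟨Sum.inl ⟨g, hg⟩, rfl⟩, rfl⟩
        have hBmem : ι (B g hg) ∈ AddSubgroup.closure ((N.map ι : AddSubmonoid _) : Set _) :=
          AddSubgroup.subset_closure ⟨B g hg, AddSubmonoid.subset_closure ⟨Sum.inr ⟨g, hg⟩, rfl⟩, rfl⟩
        have := sub_mem hAmem hBmem
        rw [← hAB g hg] at this
        exact this
      have h4 : ι a' ∈ Submodule.span ℤ (↑G : Set (Fin n → ℤ)) := by rw [hG]; exact h2
      exact h3 h4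
    obtain ⟨u, hu, v, hv, huv⟩ := exists_sub_of_mem_closure (N.map ι) h1
    obtain ⟨u₀, hu₀, rfl⟩ := hu
    obtain ⟨v₀, hv₀, rfl⟩ := hv
    refine ⟨u₀, hu₀, v₀, hv₀, hι ?_⟩
    rw [map_add]
    rw [eq_sub_iff_add_eq] at huv
    exact huv
  -- now push everything forward with `φ`
  set e := (Fintype.equivFin (↑(G : Finset _) ⊕ ↑(G : Finset _))).symm with he
  refine ⟨Fintype.card (↑(G : Finset _) ⊕ ↑(G : Finset _)), fun i => φ (t (e i)), ?_, ?_⟩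
  · intro i
    exact htS' (e i)
  · intro a ha
    obtain ⟨a', rfl⟩ := hsurj a
    have ha' : a' ∈ S' := ha
    obtain ⟨u, hu, v, hv, huv⟩ := hmain a' ha'
    have hrange : Set.range (fun i => φ (t (e i))) = φ '' Set.range t := by
      ext p
      constructor
      · rintro ⟨i, rfl⟩
        exact ⟨t (e i), ⟨e i, rfl⟩, rfl⟩
      · rintro ⟨w, ⟨j, rfl⟩, rfl⟩
        exact ⟨e.symm j, by simp⟩
    have hmap : ∀ w ∈ N, φ w ∈ AddSubmonoid.closure (Set.range fun i => φ (t (e i))) := by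
      intro w hw
      rw [hrange, ← AddMonoidHom.map_mclosure]
      exact ⟨w, hw, rfl⟩
    refine ⟨φ u, hmap u hu, φ v, hmap v hv, ?_⟩
    rw [← map_add, huv]

/-- If `P` is a finitely generated commutative monoid (written
additively) and `S ⊆ P` is a submonoid, then there are finitely many elements
`s 0, …, s (r-1) ∈ S` such that the additive congruence generated by the pairs
`(s, 0)` for `s ∈ S` equals the additive congruence generated by the pairs
`(s i, 0)`.  (Equivalently, every cokernel `P → Q` is the cokernel of a
homomorphism `ℕ^r → P` from a finitely generated free commutative monoid.) -/
theorem addConGen_submonoid_eq_finitely_generated {P : Type u} [AddCommMonoid P]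
    [AddMonoid.FG P] (S : AddSubmonoid P) :
    ∃ (r : ℕ) (s : Fin r → P), (∀ i, s i ∈ S) ∧
      addConGen (fun x y : P => x ∈ S ∧ y = 0) =
        addConGen (fun x y : P => (∃ i, x = s i) ∧ y = 0) := by
  classical
  obtain ⟨F, hF⟩ := AddMonoid.fg_def.mp ‹_›
  set n := F.card with hn
  set x : Fin n → P := fun i => (F.equivFin.symm i : P) with hx
  set φ : (Fin n → ℕ) →+ P :=
    { toFun := fun f => ∑ i, f i • x i
      map_zero' := by simp
      map_add' := fun f g => by simp [add_smul, Finset.sum_add_distrib] } with hφ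
  have hφsingle : ∀ i, φ (Pi.single i 1) = x i := by
    intro i
    simp [hφ, Pi.single_apply, ite_smul]
  have hsurj : Function.Surjective φ := by
    intro p
    have : p ∈ AddMonoidHom.mrange φ := by
      have hle : AddSubmonoid.closure (↑F : Set P) ≤ AddMonoidHom.mrange φ := by
        apply AddSubmonoid.closure_le.mpr
        intro q hq
        exact ⟨Pi.single (F.equivFin ⟨q, hq⟩) 1, by rw [hφsingle]; simp [hx]⟩
      rw [hF] at hle
      exact hle trivial
    exact this
  obtain ⟨r, s, hs, hgen⟩ := exists_fin_family φ S hsurj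
  exact ⟨r, s, hs, key_congruence S s hs hgen⟩
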